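/- Let σ be a permutation of ℕ that is a cycle whose support is finite of cardinality n ≥ 2. Then there exists a positive integer k with k ≤ n such that σ is a product of three permutations of ℕ, each conjugate to ι_k. -/

import Mathlib

/-- `iotaNat k` is the permutation `(1,2)(3,4)⋯(2k−1,2k)` of `ℕ`. -/
def iotaNat (k : ℕ) : Equiv.Perm ℕ :=
  ((List.range k).map fun i => Equiv.swap (2 * i) (2 * i + 1)).prod

open Equiv Equiv.Perm Set

/-- product of swaps `(f (2i), f (2i+1))` for `i < k` -/
def prodSwaps (f : ℕ → ℕ) (k : ℕ) : Equiv.Perm ℕ :=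
  ((List.range k).map fun i => Equiv.swap (f (2 * i)) (f (2 * i + 1))).prod

lemma iotaNat_eq_prodSwaps (k : ℕ) : iotaNat k = prodSwaps id k := rfl

lemma prodSwaps_succ (f : ℕ → ℕ) (k : ℕ) :
    prodSwaps f (k + 1) = prodSwaps f k * Equiv.swap (f (2 * k)) (f (2 * k + 1)) := by
  simp [prodSwaps, List.range_succ]

lemma prodSwaps_apply_of_ne (f : ℕ → ℕ) (k : ℕ) (x : ℕ) (h : ∀ j, j < 2 * k → f j ≠ x) :
    prodSwaps f k x = x := by
  induction k with
  | zero => simp [prodSwaps]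
  | succ k ih =>
    rw [prodSwaps_succ, Equiv.Perm.mul_apply,
      Equiv.swap_apply_of_ne_of_ne (h (2 * k) (by omega)).symm (h (2 * k + 1) (by omega)).symm]
    exact ih fun j hj => h j (by omega)

lemma prodSwaps_apply_even (f : ℕ → ℕ) (k : ℕ) (hf : Set.InjOn f (Set.Iio (2 * k)))
    {i : ℕ} (hi : i < k) : prodSwaps f k (f (2 * i)) = f (2 * i + 1) := by
  induction k with
  | zero => omega
  | succ k ih =>
    rw [prodSwaps_succ, Equiv.Perm.mul_apply]
    rcases Nat.lt_succ_iff_lt_or_eq.mp hi with h | rfl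
    · rw [Equiv.swap_apply_of_ne_of_ne
        (hf.ne (by simp only [Set.mem_Iio]; omega) (by simp only [Set.mem_Iio]; omega) (by omega))
        (hf.ne (by simp only [Set.mem_Iio]; omega) (by simp only [Set.mem_Iio]; omega) (by omega))]
      exact ih (hf.mono (fun x hx => by simp at hx ⊢; omega)) h
    · rw [Equiv.swap_apply_left]
      exact prodSwaps_apply_of_ne f i _ fun j hj =>
        hf.ne (by simp only [Set.mem_Iio]; omega) (by simp only [Set.mem_Iio]; omega) (by omega)
lemma prodSwaps_apply_odd (f : ℕ → ℕ) (k : ℕ) (hf : Set.InjOn f (Set.Iio (2 * k)))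
    {i : ℕ} (hi : i < k) : prodSwaps f k (f (2 * i + 1)) = f (2 * i) := by
  induction k with
  | zero => omega
  | succ k ih =>
    rw [prodSwaps_succ, Equiv.Perm.mul_apply]
    rcases Nat.lt_succ_iff_lt_or_eq.mp hi with h | rfl
    · rw [Equiv.swap_apply_of_ne_of_ne
        (hf.ne (by simp only [Set.mem_Iio]; omega) (by simp only [Set.mem_Iio]; omega) (by omega))
        (hf.ne (by simp only [Set.mem_Iio]; omega) (by simp only [Set.mem_Iio]; omega) (by omega))]
      exact ih (hf.mono (fun x hx => by simp at hx ⊢; omega)) h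
    · rw [Equiv.swap_apply_right]
      exact prodSwaps_apply_of_ne f i _ fun j hj =>
        hf.ne (by simp only [Set.mem_Iio]; omega) (by simp only [Set.mem_Iio]; omega) (by omega)

lemma compl_equiv_aux {p q : ℕ → Prop} [DecidablePred p] [DecidablePred q]
    (hp : {x | p x}.Finite) (hq : {x | q x}.Finite) :
    Nonempty ({x // ¬ p x} ≃ {x // ¬ q x}) := by
  have h1 : Infinite {x // ¬ p x} := by
    have : {x | p x}ᶜ.Infinite := hp.infinite_compl
    exact this.to_subtype
  have h2 : Infinite {x // ¬ q x} := by
    have : {x | q x}ᶜ.Infinite := hq.infinite_compl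
    exact this.to_subtype
  obtain ⟨d1⟩ := nonempty_denumerable {x // ¬ p x}
  obtain ⟨d2⟩ := nonempty_denumerable {x // ¬ q x}
  exact ⟨(@Denumerable.eqv _ d1).trans (@Denumerable.eqv _ d2).symm⟩

/-- extend an injection on an initial segment to a permutation of ℕ -/
lemma exists_perm_extend (m : ℕ) (f : ℕ → ℕ) (hf : Set.InjOn f (Set.Iio m)) :
    ∃ g : Equiv.Perm ℕ, ∀ j, j < m → g j = f j := by
  classical
  set p : ℕ → Prop := fun x => x < m with hp
  set q : ℕ → Prop := fun x => x ∈ (Finset.range m).image f with hq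
  let e₁ : {x // p x} ≃ {x // q x} := by
    refine Equiv.ofBijective (fun x => ⟨f x.1, ?_⟩) ⟨?_, ?_⟩
    · simp [hq]; exact ⟨x.1, x.2, rfl⟩
    · rintro ⟨x, hx⟩ ⟨y, hy⟩ hxy
      simp only [Subtype.mk.injEq] at hxy ⊢
      exact hf (by simpa using hx) (by simpa using hy) hxy
    · rintro ⟨y, hy⟩
      simp only [hq, Finset.mem_image, Finset.mem_range] at hy
      obtain ⟨x, hx, rfl⟩ := hy
      exact ⟨⟨x, hx⟩, rfl⟩
  have hpfin : {x | p x}.Finite := Set.finite_Iio m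
  have hqfin : {x | q x}.Finite := Set.Finite.subset ((Finset.range m).image f).finite_toSet
    (fun x hx => hx)
  obtain ⟨c⟩ := compl_equiv_aux hpfin hqfin
  refine ⟨(Equiv.sumCompl p).symm.trans ((e₁.sumCongr c).trans (Equiv.sumCompl q)), ?_⟩
  intro j hj
  have : (Equiv.sumCompl p).symm j = Sum.inl ⟨j, hj⟩ :=
    Equiv.sumCompl_symm_apply_of_pos (p := p) hj
  simp only [Equiv.trans_apply, this, Equiv.sumCongr_apply, Sum.map_inl,
    Equiv.sumCompl_apply_inl, e₁, Equiv.ofBijective_apply]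
  rfl

lemma isConj_prodSwaps (f : ℕ → ℕ) (k : ℕ) (hf : Set.InjOn f (Set.Iio (2 * k))) :
    IsConj (iotaNat k) (prodSwaps f k) := by
  obtain ⟨g, hg⟩ := exists_perm_extend (2 * k) f hf
  rw [isConj_iff]
  refine ⟨g, ?_⟩
  rw [iotaNat_eq_prodSwaps]
  have key : ∀ j, j ≤ k → g * prodSwaps id j * g⁻¹ = prodSwaps f j := by
    intro j hj
    induction j with
    | zero => simp [prodSwaps]
    | succ j ih =>
      have h1 : g * prodSwaps id (j + 1) * g⁻¹ =
          (g * prodSwaps id j * g⁻¹) * (g * Equiv.swap (id (2 * j)) (id (2 * j + 1)) * g⁻¹) := by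
        rw [prodSwaps_succ]; group
      rw [h1, ih (by omega), ← Equiv.swap_apply_apply]
      simp only [id_eq]
      rw [hg (2 * j) (by omega), hg (2 * j + 1) (by omega), prodSwaps_succ]
  exact key k le_rfl

lemma isConj_extendDomain {n : ℕ} {p q : ℕ → Prop} [DecidablePred p] [DecidablePred q]
    (hp : {x | p x}.Finite) (hq : {x | q x}.Finite)
    (e₁ : Fin n ≃ Subtype p) (e₂ : Fin n ≃ Subtype q) (f : Equiv.Perm (Fin n)) :
    IsConj (f.extendDomain e₁) (f.extendDomain e₂) := by
  obtain ⟨c⟩ := compl_equiv_aux hp hq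
  set g : Equiv.Perm ℕ :=
    (Equiv.sumCompl p).symm.trans (((e₁.symm.trans e₂).sumCongr c).trans (Equiv.sumCompl q))
    with hgdef
  have hgpos : ∀ x (hx : p x), g x = ↑(e₂ (e₁.symm ⟨x, hx⟩)) := by
    intro x hx
    simp [hgdef, Equiv.sumCompl_symm_apply_of_pos (p := p) hx]
  have hgneg : ∀ x (hx : ¬ p x), g x = ↑(c ⟨x, hx⟩) := by
    intro x hx
    simp [hgdef, Equiv.sumCompl_symm_apply_of_neg (p := p) hx]
  rw [isConj_iff]
  refine ⟨g, ?_⟩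
  rw [mul_inv_eq_iff_eq_mul]
  ext x
  rw [Equiv.Perm.mul_apply, Equiv.Perm.mul_apply]
  by_cases hx : p x
  · rw [Equiv.Perm.extendDomain_apply_subtype f e₁ hx,
      hgpos _ (Subtype.prop (e₁ (f (e₁.symm ⟨x, hx⟩)))),
      hgpos x hx,
      Equiv.Perm.extendDomain_apply_subtype f e₂ (Subtype.prop (e₂ (e₁.symm ⟨x, hx⟩)))]
    simp
  · rw [Equiv.Perm.extendDomain_apply_not_subtype f e₁ hx, hgneg x hx,
      Equiv.Perm.extendDomain_apply_not_subtype f e₂ (Subtype.prop (c ⟨x, hx⟩))]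

lemma extendRotate_apply {n : ℕ} (x : ℕ) (hx : x < n) :
    (finRotate n).extendDomain Fin.equivSubtype x = if x = n - 1 then 0 else x + 1 := by
  obtain ⟨n', rfl⟩ : ∃ n', n = n' + 1 := ⟨n - 1, by omega⟩
  rw [Equiv.Perm.extendDomain_apply_subtype (finRotate (n' + 1)) Fin.equivSubtype (b := x) hx]
  have h1 : (Fin.equivSubtype.symm ⟨x, hx⟩ : Fin (n' + 1)) = ⟨x, hx⟩ := rfl
  rw [h1, finRotate_succ_apply]
  have h2 : (↑(Fin.equivSubtype ((⟨x, hx⟩ : Fin (n' + 1)) + 1)) : ℕ)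
      = ((⟨x, hx⟩ : Fin (n' + 1)) + 1).val := rfl
  rw [h2, Fin.val_add_one]
  simp only [Nat.add_sub_cancel]
  by_cases hxk : x = n'
  · rw [if_pos (show (⟨x, hx⟩ : Fin (n' + 1)) = Fin.last n' by simp [Fin.ext_iff, hxk]),
      if_pos hxk]
  · rw [if_neg (show ¬(⟨x, hx⟩ : Fin (n' + 1)) = Fin.last n' by simp [Fin.ext_iff, hxk]),
      if_neg hxk]

/-- Lemma 8.12: if `σ` is a finitely supported cycle of `ℕ` with support of size `n ≥ 2`,
then there is a positive `k ≤ n` such that `σ` is a product of three conjugates of `ι_k`. -/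
theorem cycle_eq_prod_three_conjugates_of_iota (σ : Equiv.Perm ℕ) (hc : σ.IsCycle)
    (n : ℕ) (hfin : {x : ℕ | σ x ≠ x}.Finite) (hcard : {x : ℕ | σ x ≠ x}.ncard = n)
    (hn : 2 ≤ n) :
    ∃ k : ℕ, 0 < k ∧ k ≤ n ∧
      ∃ σ₁ σ₂ σ₃ : Equiv.Perm ℕ,
        IsConj (iotaNat k) σ₁ ∧ IsConj (iotaNat k) σ₂ ∧ IsConj (iotaNat k) σ₃ ∧
        σ = σ₁ * σ₂ * σ₃ := by
  classical
  set S : Finset ℕ := hfin.toFinset with hSdef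
  have hmem : ∀ x, x ∈ S ↔ σ x ≠ x := fun x => hfin.mem_toFinset
  have hcardS : S.card = n := by
    rw [← hcard, hSdef, Set.ncard_eq_toFinset_card _ hfin]
  have hstab : ∀ x, x ∈ S ↔ σ x ∈ S := by
    intro x
    rw [hmem, hmem]
    constructor
    · intro h h2
      exact h (σ.injective h2)
    · intro h h2
      rw [h2] at h
      exact h h2
  have hcardsub : Fintype.card {x // x ∈ S} = n := by simpa using hcardS
  obtain ⟨e⟩ : Nonempty (Fin n ≃ {x // x ∈ S}) := ⟨(Fintype.equivFinOfCardEq hcardsub).symm⟩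
  set τ : Equiv.Perm (Fin n) := (Equiv.permCongr e.symm) (σ.subtypePerm (fun x => (hstab x).symm)) with hτdef
  have hστ : σ = τ.extendDomain e := by
    ext x
    by_cases hx : x ∈ S
    · rw [Equiv.Perm.extendDomain_apply_subtype _ e hx]
      simp [hτdef, Equiv.permCongr_apply, Equiv.Perm.subtypePerm_apply]
    · rw [Equiv.Perm.extendDomain_apply_not_subtype _ e hx]
      by_contra h
      exact hx ((hmem x).2 h)
  have hτne : ∀ y : Fin n, τ y ≠ y := by
    intro y h
    have h2 : σ.subtypePerm (fun x => (hstab x).symm) (e y) = e y := by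
      apply e.symm.injective
      simpa [hτdef, Equiv.permCongr_apply] using h
    have h3 : σ ↑(e y) = ↑(e y) := by
      simpa using congrArg Subtype.val h2
    exact (hmem _).1 (e y).2 h3
  have hτsupp : τ.support = Finset.univ := by
    ext y
    simp [Equiv.Perm.mem_support, hτne y]
  have hτcyc : τ.IsCycle := by
    obtain ⟨x₀, hx₀, hsc⟩ := hc
    have hx₀S : x₀ ∈ S := (hmem x₀).2 hx₀
    refine ⟨e.symm ⟨x₀, hx₀S⟩, hτne _, ?_⟩
    intro y hy
    obtain ⟨i, hi⟩ := hsc ((hmem _).1 (e y).2)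
    refine ⟨i, ?_⟩
    have hστ' : σ = (Equiv.Perm.extendDomainHom e) τ := hστ
    have hhom : σ ^ i = ((τ ^ i)).extendDomain e := by
      calc σ ^ i = ((Equiv.Perm.extendDomainHom e) τ) ^ i := by rw [← hστ']
        _ = (Equiv.Perm.extendDomainHom e) (τ ^ i) := (map_zpow _ _ _).symm
        _ = (τ ^ i).extendDomain e := rfl
    have h3 : ((τ ^ i).extendDomain e) x₀ = ↑(e ((τ ^ i) (e.symm ⟨x₀, hx₀S⟩))) := by
      rw [Equiv.Perm.extendDomain_apply_subtype _ e hx₀S]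
    have h4 : (↑(e ((τ ^ i) (e.symm ⟨x₀, hx₀S⟩))) : ℕ) = ↑(e y) := by
      rw [← h3, ← hhom, hi]
    exact e.injective (Subtype.coe_injective h4)
  -- conjugate to the standard rotation on [0, n)
  have hconj1 : IsConj (finRotate n) τ := by
    refine (isCycle_finRotate_of_le hn).isConj hτcyc ?_
    rw [support_finRotate_of_le hn, hτsupp]
  have hconj2 : IsConj ((finRotate n).extendDomain Fin.equivSubtype) σ := by
    have hA : IsConj ((finRotate n).extendDomain Fin.equivSubtype)
        ((finRotate n).extendDomain e) := by
      refine isConj_extendDomain ?_ ?_ Fin.equivSubtype e (finRotate n)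
      · exact Set.finite_Iio n
      · exact S.finite_toSet
    have hB : IsConj ((finRotate n).extendDomain e) σ := by
      have := (Equiv.Perm.extendDomainHom e).map_isConj hconj1
      rw [Equiv.Perm.extendDomainHom_apply, Equiv.Perm.extendDomainHom_apply, ← hστ] at this
      exact this
    exact hA.trans hB
  obtain ⟨cg, hcg⟩ := isConj_iff.mp hconj2
  -- the decomposition of the standard rotation
  set k := n - 1 with hk
  set a := n / 2 with ha
  set b := (n - 1) / 2 with hb
  set pa := k - a with hpa
  set pb := k - b with hpb
  set Q0 := n + 2 * pa with hQ0
  set f₁ : ℕ → ℕ := fun j =>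
    if j < 2 * b then (if j % 2 = 0 then j / 2 + 1 else k - j / 2) else Q0 + (j - 2 * b)
    with hf₁
  set f₂ : ℕ → ℕ := fun j =>
    if j < 2 * a then (if j % 2 = 0 then j / 2 else k - j / 2) else n + (j - 2 * a)
    with hf₂
  set f₃ : ℕ → ℕ := fun j =>
    if j < 2 * pb then Q0 + j else n + (j - 2 * pb) with hf₃
  have hinj₁ : Set.InjOn f₁ (Set.Iio (2 * k)) := by
    intro u hu v hv huv
    simp only [Set.mem_Iio] at hu hv
    simp only [hf₁] at huv
    split_ifs at huv <;> omega
  have hinj₂ : Set.InjOn f₂ (Set.Iio (2 * k)) := by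
    intro u hu v hv huv
    simp only [Set.mem_Iio] at hu hv
    simp only [hf₂] at huv
    split_ifs at huv <;> omega
  have hinj₃ : Set.InjOn f₃ (Set.Iio (2 * k)) := by
    intro u hu v hv huv
    simp only [Set.mem_Iio] at hu hv
    simp only [hf₃] at huv
    split_ifs at huv <;> omega
  -- pointwise description of the three involutions
  have H2a : ∀ x, x < n → prodSwaps f₂ k x = k - x := by
    intro x hx
    rcases lt_or_ge x a with h | h
    · have hv : f₂ (2 * x) = x := by simp only [hf₂]; split_ifs <;> omega
      have hv2 : f₂ (2 * x + 1) = k - x := by simp only [hf₂]; split_ifs <;> omega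
      conv_lhs => rw [← hv]
      rw [prodSwaps_apply_even f₂ k hinj₂ (i := x) (by omega)]
      exact hv2
    · rcases lt_or_ge (k - x) a with h2 | h2
      · have hv : f₂ (2 * (k - x) + 1) = x := by simp only [hf₂]; split_ifs <;> omega
        have hv2 : f₂ (2 * (k - x)) = k - x := by simp only [hf₂]; split_ifs <;> omega
        conv_lhs => rw [← hv]
        rw [prodSwaps_apply_odd f₂ k hinj₂ (i := (k - x)) (by omega)]
        exact hv2
      · have hfix : prodSwaps f₂ k x = x := by
          refine prodSwaps_apply_of_ne f₂ k x ?_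
          intro j hj
          simp only [hf₂]
          split_ifs <;> omega
        rw [hfix]
        omega
  have H2b : ∀ x, n ≤ x → x < Q0 →
      prodSwaps f₂ k x = if (x - n) % 2 = 0 then x + 1 else x - 1 := by
    intro x h1 h2
    by_cases hp : (x - n) % 2 = 0
    · have hv : f₂ (2 * (a + (x - n) / 2)) = x := by simp only [hf₂]; split_ifs <;> omega
      have hv2 : f₂ (2 * (a + (x - n) / 2) + 1) = x + 1 := by
        simp only [hf₂]; split_ifs <;> omega
      rw [if_pos hp]
      conv_lhs => rw [← hv]
      rw [prodSwaps_apply_even f₂ k hinj₂ (i := (a + (x - n) / 2)) (by omega)]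
      exact hv2
    · have hv : f₂ (2 * (a + (x - n) / 2) + 1) = x := by simp only [hf₂]; split_ifs <;> omega
      have hv2 : f₂ (2 * (a + (x - n) / 2)) = x - 1 := by simp only [hf₂]; split_ifs <;> omega
      rw [if_neg hp]
      conv_lhs => rw [← hv]
      rw [prodSwaps_apply_odd f₂ k hinj₂ (i := (a + (x - n) / 2)) (by omega)]
      exact hv2
  have H2c : ∀ x, Q0 ≤ x → prodSwaps f₂ k x = x := by
    intro x h1
    refine prodSwaps_apply_of_ne f₂ k x ?_
    intro j hj
    simp only [hf₂]
    split_ifs <;> omega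
  have H1a : ∀ x, 0 < x → x < n → prodSwaps f₁ k x = n - x := by
    intro x hx0 hx
    rcases lt_or_ge (x - 1) b with h | h
    · have hv : f₁ (2 * (x - 1)) = x := by simp only [hf₁]; split_ifs <;> omega
      have hv2 : f₁ (2 * (x - 1) + 1) = n - x := by simp only [hf₁]; split_ifs <;> omega
      conv_lhs => rw [← hv]
      rw [prodSwaps_apply_even f₁ k hinj₁ (i := (x - 1)) (by omega)]
      exact hv2
    · rcases lt_or_ge (k - x) b with h2 | h2
      · have hv : f₁ (2 * (k - x) + 1) = x := by simp only [hf₁]; split_ifs <;> omega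
        have hv2 : f₁ (2 * (k - x)) = n - x := by simp only [hf₁]; split_ifs <;> omega
        conv_lhs => rw [← hv]
        rw [prodSwaps_apply_odd f₁ k hinj₁ (i := (k - x)) (by omega)]
        exact hv2
      · have hfix : prodSwaps f₁ k x = x := by
          refine prodSwaps_apply_of_ne f₁ k x ?_
          intro j hj
          simp only [hf₁]
          split_ifs <;> omega
        rw [hfix]
        omega
  have H1b : prodSwaps f₁ k 0 = 0 := by
    refine prodSwaps_apply_of_ne f₁ k 0 ?_
    intro j hj
    simp only [hf₁]
    split_ifs <;> omega
  have H1c : ∀ x, n ≤ x → x < Q0 → prodSwaps f₁ k x = x := by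
    intro x h1 h2
    refine prodSwaps_apply_of_ne f₁ k x ?_
    intro j hj
    simp only [hf₁]
    split_ifs <;> omega
  have H1d : ∀ x, Q0 ≤ x → x < Q0 + 2 * pb →
      prodSwaps f₁ k x = if (x - Q0) % 2 = 0 then x + 1 else x - 1 := by
    intro x h1 h2
    by_cases hp : (x - Q0) % 2 = 0
    · have hv : f₁ (2 * (b + (x - Q0) / 2)) = x := by simp only [hf₁]; split_ifs <;> omega
      have hv2 : f₁ (2 * (b + (x - Q0) / 2) + 1) = x + 1 := by
        simp only [hf₁]; split_ifs <;> omega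
      rw [if_pos hp]
      conv_lhs => rw [← hv]
      rw [prodSwaps_apply_even f₁ k hinj₁ (i := (b + (x - Q0) / 2)) (by omega)]
      exact hv2
    · have hv : f₁ (2 * (b + (x - Q0) / 2) + 1) = x := by
        simp only [hf₁]; split_ifs <;> omega
      have hv2 : f₁ (2 * (b + (x - Q0) / 2)) = x - 1 := by
        simp only [hf₁]; split_ifs <;> omega
      rw [if_neg hp]
      conv_lhs => rw [← hv]
      rw [prodSwaps_apply_odd f₁ k hinj₁ (i := (b + (x - Q0) / 2)) (by omega)]
      exact hv2
  have H1e : ∀ x, Q0 + 2 * pb ≤ x → prodSwaps f₁ k x = x := by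
    intro x h1
    refine prodSwaps_apply_of_ne f₁ k x ?_
    intro j hj
    simp only [hf₁]
    split_ifs <;> omega
  have H3a : ∀ x, x < n → prodSwaps f₃ k x = x := by
    intro x h1
    refine prodSwaps_apply_of_ne f₃ k x ?_
    intro j hj
    simp only [hf₃]
    split_ifs <;> omega
  have H3b : ∀ x, n ≤ x → x < Q0 →
      prodSwaps f₃ k x = if (x - n) % 2 = 0 then x + 1 else x - 1 := by
    intro x h1 h2
    by_cases hp : (x - n) % 2 = 0
    · have hv : f₃ (2 * (pb + (x - n) / 2)) = x := by simp only [hf₃]; split_ifs <;> omega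
      have hv2 : f₃ (2 * (pb + (x - n) / 2) + 1) = x + 1 := by
        simp only [hf₃]; split_ifs <;> omega
      rw [if_pos hp]
      conv_lhs => rw [← hv]
      rw [prodSwaps_apply_even f₃ k hinj₃ (i := (pb + (x - n) / 2)) (by omega)]
      exact hv2
    · have hv : f₃ (2 * (pb + (x - n) / 2) + 1) = x := by
        simp only [hf₃]; split_ifs <;> omega
      have hv2 : f₃ (2 * (pb + (x - n) / 2)) = x - 1 := by
        simp only [hf₃]; split_ifs <;> omega
      rw [if_neg hp]
      conv_lhs => rw [← hv]
      rw [prodSwaps_apply_odd f₃ k hinj₃ (i := (pb + (x - n) / 2)) (by omega)]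
      exact hv2
  have H3c : ∀ x, Q0 ≤ x → x < Q0 + 2 * pb →
      prodSwaps f₃ k x = if (x - Q0) % 2 = 0 then x + 1 else x - 1 := by
    intro x h1 h2
    by_cases hp : (x - Q0) % 2 = 0
    · have hv : f₃ (2 * ((x - Q0) / 2)) = x := by simp only [hf₃]; split_ifs <;> omega
      have hv2 : f₃ (2 * ((x - Q0) / 2) + 1) = x + 1 := by
        simp only [hf₃]; split_ifs <;> omega
      rw [if_pos hp]
      conv_lhs => rw [← hv]
      rw [prodSwaps_apply_even f₃ k hinj₃ (i := ((x - Q0) / 2)) (by omega)]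
      exact hv2
    · have hv : f₃ (2 * ((x - Q0) / 2) + 1) = x := by
        simp only [hf₃]; split_ifs <;> omega
      have hv2 : f₃ (2 * ((x - Q0) / 2)) = x - 1 := by
        simp only [hf₃]; split_ifs <;> omega
      rw [if_neg hp]
      conv_lhs => rw [← hv]
      rw [prodSwaps_apply_odd f₃ k hinj₃ (i := ((x - Q0) / 2)) (by omega)]
      exact hv2
  have H3d : ∀ x, Q0 + 2 * pb ≤ x → prodSwaps f₃ k x = x := by
    intro x h1
    refine prodSwaps_apply_of_ne f₃ k x ?_
    intro j hj
    simp only [hf₃]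
    split_ifs <;> omega
  have hρfix : ∀ x, ¬ (x < n) →
      (finRotate n).extendDomain Fin.equivSubtype x = x := by
    intro x hx
    exact Equiv.Perm.extendDomain_apply_not_subtype _ _ hx
  -- the product identity
  have hfinal : (finRotate n).extendDomain Fin.equivSubtype =
      prodSwaps f₁ k * prodSwaps f₂ k * prodSwaps f₃ k := by
    ext x
    rw [Equiv.Perm.mul_apply, Equiv.Perm.mul_apply]
    rcases lt_or_ge x n with h1 | h1
    · rw [H3a x h1, H2a x h1, extendRotate_apply x h1]
      by_cases he : x = n - 1
      · rw [if_pos he]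
        have h0 : k - x = 0 := by omega
        rw [h0, H1b]
      · rw [if_neg he, H1a (k - x) (by omega) (by omega)]
        omega
    · rw [hρfix x (by omega)]
      rcases lt_or_ge x Q0 with h2 | h2
      · rw [H3b x h1 h2]
        by_cases hp : (x - n) % 2 = 0
        · rw [if_pos hp, H2b (x + 1) (by omega) (by omega), if_neg (by omega),
            show x + 1 - 1 = x by omega, H1c x h1 h2]
        · rw [if_neg hp, H2b (x - 1) (by omega) (by omega), if_pos (by omega),
            show x - 1 + 1 = x by omega, H1c x h1 h2]
      · rcases lt_or_ge x (Q0 + 2 * pb) with h3 | h3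
        · rw [H3c x h2 h3]
          by_cases hp : (x - Q0) % 2 = 0
          · rw [if_pos hp, H2c (x + 1) (by omega), H1d (x + 1) (by omega) (by omega),
              if_neg (by omega)]
            omega
          · rw [if_neg hp, H2c (x - 1) (by omega), H1d (x - 1) (by omega) (by omega),
              if_pos (by omega)]
            omega
        · rw [H3d x h3, H2c x (by omega), H1e x h3]
  refine ⟨k, by omega, by omega,
    cg * prodSwaps f₁ k * cg⁻¹, cg * prodSwaps f₂ k * cg⁻¹, cg * prodSwaps f₃ k * cg⁻¹,
    ?_, ?_, ?_, ?_⟩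
  · exact (isConj_prodSwaps f₁ k hinj₁).trans (isConj_iff.mpr ⟨cg, rfl⟩)
  · exact (isConj_prodSwaps f₂ k hinj₂).trans (isConj_iff.mpr ⟨cg, rfl⟩)
  · exact (isConj_prodSwaps f₃ k hinj₃).trans (isConj_iff.mpr ⟨cg, rfl⟩)
  · rw [← hcg, hfinal]
    group
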